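/- Let A be a real n×n matrix and x ∈ ℝⁿ a vector such that the vectors x, A·x, A²·x, …, A^{n−1}·x are linearly independent (i.e. the pair (A, x) is completely controllable). Then there exists an invertible real n×n matrix R and a vector h ∈ ℝⁿ such that R·x = g and R·A·R⁻¹ = S + g·hᵀ, i.e. R·A·R⁻¹ is in companion form. -/

import Mathlib

open Matrix

/-- The `n × n` shift matrix `S` with `S_{i,i+1} = 1` and all other entries `0`. -/
def Smat (n : ℕ) : Matrix (Fin n) (Fin n) ℝ :=
  Matrix.of fun i j => if (i : ℕ) + 1 = (j : ℕ) then 1 else 0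

/-- The last standard basis vector `g` of `ℝⁿ`. -/
def gvec (n : ℕ) : Fin n → ℝ := fun i => if (i : ℕ) = n - 1 then 1 else 0

/-- Auxiliary recursive sequence of vectors. -/
def qseq {n : ℕ} (A : Matrix (Fin n) (Fin n) ℝ) (x : Fin n → ℝ) (γ : ℕ → ℝ) : ℕ → (Fin n → ℝ)
  | 0 => x
  | k + 1 => A.mulVec (qseq A x γ k) - γ k • x

/-- If `(A, x)` is completely controllable, then some change of basis `R` sends `x` to `g`
and puts `A` into companion form `S + g·hᵀ`. -/
theorem controllable_to_companion_form {n : ℕ} (hn : 0 < n)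
    (A : Matrix (Fin n) (Fin n) ℝ) (x : Fin n → ℝ)
    (hctrl : LinearIndependent ℝ (fun i : Fin n => (A ^ (i : ℕ)).mulVec x)) :
    ∃ (R : Matrix (Fin n) (Fin n) ℝ) (h : Fin n → ℝ),
      IsUnit R.det ∧ R.mulVec x = gvec n ∧ R * A * R⁻¹ = Smat n + vecMulVec (gvec n) h := by
  obtain ⟨m, rfl⟩ : ∃ m, n = m + 1 := ⟨n - 1, (Nat.succ_pred_eq_of_pos hn).symm⟩
  clear hn
  have hcard : Fintype.card (Fin (m + 1)) = Module.finrank ℝ (Fin (m + 1) → ℝ) := by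
    simp
  let B : Module.Basis (Fin (m + 1)) ℝ (Fin (m + 1) → ℝ) :=
    basisOfLinearIndependentOfCardEqFinrank hctrl hcard
  have hB : ∀ i, B i = (A ^ (i : ℕ)).mulVec x := fun i => by
    simp [B, coe_basisOfLinearIndependentOfCardEqFinrank]
  set c : Fin (m + 1) → ℝ := fun i => B.repr ((A ^ (m + 1)).mulVec x) i with hc_def
  have hc : (A ^ (m + 1)).mulVec x = ∑ i, c i • (A ^ (i : ℕ)).mulVec x := by
    conv_lhs => rw [← B.sum_repr ((A ^ (m + 1)).mulVec x)]
    exact Finset.sum_congr rfl fun i _ => by rw [hB]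
  set γ : ℕ → ℝ := fun k => c ⟨m - k, by omega⟩ with hγ_def
  set q : ℕ → (Fin (m + 1) → ℝ) := qseq A x γ with hq_def
  have hq0 : q 0 = x := rfl
  have hpow : ∀ a b : ℕ, a = b → (A ^ a).mulVec x = (A ^ b).mulVec x := fun a b h => by rw [h]
  have hAq : ∀ k, A.mulVec (q k) = q (k + 1) + γ k • x := by
    intro k
    show A.mulVec (q k) = (A.mulVec (q k) - γ k • x) + γ k • x
    abel
  -- the explicit formula for q
  have hbq : ∀ k, q k = (A ^ k).mulVec x
      - ∑ j ∈ Finset.range k, γ j • (A ^ (k - 1 - j)).mulVec x := by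
    intro k
    induction k with
    | zero => simp [hq0]
    | succ k ih =>
      have hstep : q (k + 1) = A.mulVec (q k) - γ k • x := rfl
      rw [hstep, ih, A.mulVec_sub]
      have h1 : A.mulVec ((A ^ k).mulVec x) = (A ^ (k + 1)).mulVec x := by
        rw [Matrix.mulVec_mulVec, ← pow_succ']
      have h2 : A.mulVec (∑ j ∈ Finset.range k, γ j • (A ^ (k - 1 - j)).mulVec x)
          = ∑ j ∈ Finset.range k, γ j • (A ^ (k - j)).mulVec x := by
        rw [← A.mulVecLin_apply, map_sum]
        refine Finset.sum_congr rfl fun j hj => ?_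
        rw [Finset.mem_range] at hj
        rw [_root_.map_smul]
        congr 1
        rw [A.mulVecLin_apply, Matrix.mulVec_mulVec, ← pow_succ']
        exact hpow _ _ (by omega)
      rw [h1, h2, Finset.sum_range_succ]
      have hsum : ∀ j ∈ Finset.range k, γ j • (A ^ (k + 1 - 1 - j)).mulVec x
          = γ j • (A ^ (k - j)).mulVec x := by
        intro j hj; rw [Finset.mem_range] at hj; rw [hpow (k + 1 - 1 - j) (k - j) (by omega)]
      rw [Finset.sum_congr rfl hsum]
      have h3 : (k + 1 - 1 - k) = 0 := by omega
      rw [h3, pow_zero, Matrix.one_mulVec]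
      abel
  have hγc : ∀ i : Fin (m + 1), γ (m - (i : ℕ)) = c i := by
    intro i
    have hi : m - (m - (i : ℕ)) = (i : ℕ) := by omega
    simp only [hγ_def]
    congr 1
    exact Fin.ext hi
  -- the key identity
  have hkey : A.mulVec (q m) = γ m • x := by
    have h1 : A.mulVec (q m) = (A ^ (m + 1)).mulVec x
        - ∑ j ∈ Finset.range m, γ j • (A ^ (m - j)).mulVec x := by
      rw [hbq m, A.mulVec_sub]
      congr 1
      · rw [Matrix.mulVec_mulVec, ← pow_succ']
      · rw [← A.mulVecLin_apply, map_sum]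
        refine Finset.sum_congr rfl fun j hj => ?_
        rw [Finset.mem_range] at hj
        rw [_root_.map_smul]
        congr 1
        rw [A.mulVecLin_apply, Matrix.mulVec_mulVec, ← pow_succ']
        exact hpow _ _ (by omega)
    have h2 : (A ^ (m + 1)).mulVec x
        = ∑ i ∈ Finset.range (m + 1), γ i • (A ^ (m - i)).mulVec x := by
      rw [hc]
      have e1 : ∀ i : Fin (m + 1), c i • (A ^ (i : ℕ)).mulVec x
          = (fun j : ℕ => γ (m - j) • (A ^ j).mulVec x) (i : ℕ) := fun i => by
        simp only [hγc]
      rw [Finset.sum_congr rfl fun i _ => e1 i,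
        Fin.sum_univ_eq_sum_range (fun j : ℕ => γ (m - j) • (A ^ j).mulVec x) (m + 1),
        ← Finset.sum_range_reflect (fun i => γ i • (A ^ (m - i)).mulVec x) (m + 1)]
      refine Finset.sum_congr rfl fun j hj => ?_
      rw [Finset.mem_range] at hj
      have e2 : m + 1 - 1 - j = m - j := by omega
      have e3 : m - (m - j) = j := by omega
      rw [e2, e3]
    rw [h1, h2, Finset.sum_range_succ, Nat.sub_self, pow_zero, Matrix.one_mulVec]
    abel
  -- the columns span everything
  have hmem : ∀ k, k ≤ m → (A ^ k).mulVec x ∈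
      Submodule.span ℝ (Set.range fun j : Fin (m + 1) => q (m - (j : ℕ))) := by
    intro k
    induction k using Nat.strong_induction_on with
    | _ k ih =>
      intro hk
      have hqmem : q k ∈
          Submodule.span ℝ (Set.range fun j : Fin (m + 1) => q (m - (j : ℕ))) := by
        apply Submodule.subset_span
        refine ⟨⟨m - k, by omega⟩, ?_⟩
        have he : m - ((⟨m - k, by omega⟩ : Fin (m + 1)) : ℕ) = k := by
          simp only [Fin.val_mk]; omega
        exact congrArg q he
      have hrw : (A ^ k).mulVec x
          = q k + ∑ j ∈ Finset.range k, γ j • (A ^ (k - 1 - j)).mulVec x := by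
        rw [hbq k]; abel
      rw [hrw]
      refine Submodule.add_mem _ hqmem (Submodule.sum_mem _ fun j hj => ?_)
      rw [Finset.mem_range] at hj
      exact Submodule.smul_mem _ _ (ih (k - 1 - j) (by omega) (by omega))
  have hspan : ⊤ ≤ Submodule.span ℝ (Set.range fun j : Fin (m + 1) => q (m - (j : ℕ))) := by
    rw [← B.span_eq]
    refine Submodule.span_le.mpr ?_
    rintro _ ⟨i, rfl⟩
    rw [hB]
    exact hmem i (by omega)
  let Q : Module.Basis (Fin (m + 1)) ℝ (Fin (m + 1) → ℝ) :=
    basisOfTopLeSpanOfCardEqFinrank (fun j : Fin (m + 1) => q (m - (j : ℕ))) hspan hcard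
  have hQ : ⇑Q = fun j : Fin (m + 1) => q (m - (j : ℕ)) :=
    coe_basisOfTopLeSpanOfCardEqFinrank _ hspan hcard
  set P : Matrix (Fin (m + 1)) (Fin (m + 1)) ℝ :=
    Matrix.of fun i j => q (m - (j : ℕ)) i with hP_def
  have hPe : P = (Pi.basisFun ℝ (Fin (m + 1))).toMatrix (fun j : Fin (m + 1) => q (m - (j : ℕ))) := by
    ext i j
    rw [Module.Basis.toMatrix_apply, Pi.basisFun_repr]
    rfl
  have hPdet : IsUnit P.det := by
    have h1 : IsUnit ((Pi.basisFun ℝ (Fin (m + 1))).det ⇑Q) :=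
      (Pi.basisFun ℝ (Fin (m + 1))).isUnit_det Q
    rw [hQ] at h1
    rw [hPe, ← Module.Basis.det_apply]
    exact h1
  have hPlast : ∀ i, P i (Fin.last m) = x i := by
    intro i
    show q (m - ((Fin.last m : Fin (m + 1)) : ℕ)) i = x i
    rw [Fin.val_last, Nat.sub_self, hq0]
  have hPg : P.mulVec (gvec (m + 1)) = x := by
    ext i
    show ∑ j, P i j * gvec (m + 1) j = x i
    have e1 : ∀ j : Fin (m + 1), P i j * gvec (m + 1) j
        = if j = Fin.last m then P i j else 0 := by
      intro j
      simp only [gvec]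
      by_cases h : (j : ℕ) = m + 1 - 1
      · rw [if_pos h, if_pos (Fin.ext (by simp only [Fin.val_last]; omega)), mul_one]
      · rw [if_neg h, if_neg (fun hj => h (by rw [hj]; simp)), mul_zero]
    rw [Finset.sum_congr rfl fun j _ => e1 j, Finset.sum_ite_eq' Finset.univ (Fin.last m),
      if_pos (Finset.mem_univ _), hPlast]
  -- the main matrix identity
  have hAP : A * P = P * (Smat (m + 1) + vecMulVec (gvec (m + 1)) c) := by
    ext i j
    rw [Matrix.mul_apply, Matrix.mul_apply]
    have hC : ∀ k : Fin (m + 1), (Smat (m + 1) + vecMulVec (gvec (m + 1)) c) k j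
        = (if (k : ℕ) + 1 = (j : ℕ) then 1 else 0) + (if k = Fin.last m then c j else 0) := by
      intro k
      rw [Matrix.add_apply, vecMulVec_apply]
      congr 1
      simp only [gvec]
      by_cases h : (k : ℕ) = m + 1 - 1
      · rw [if_pos h, if_pos (Fin.ext (by simp only [Fin.val_last]; omega)), one_mul]
      · rw [if_neg h, if_neg (fun hk => h (by rw [hk]; simp)), zero_mul]
    have hL : ∑ k, A i k * P k j = A.mulVec (q (m - (j : ℕ))) i := rfl
    have hR2 : ∑ k : Fin (m + 1), P i k * (if k = Fin.last m then c j else 0)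
        = x i * c j := by
      have e1 : ∀ k : Fin (m + 1), P i k * (if k = Fin.last m then c j else 0)
          = if k = Fin.last m then P i k * c j else 0 := by
        intro k; by_cases h : k = Fin.last m <;> simp [h]
      rw [Finset.sum_congr rfl fun k _ => e1 k, Finset.sum_ite_eq' Finset.univ (Fin.last m),
        if_pos (Finset.mem_univ _), hPlast]
    simp only [hC, mul_add, Finset.sum_add_distrib, hR2, hL]
    induction j using Fin.cases with
    | zero =>
      have hz : ∑ k : Fin (m + 1), P i k
          * (if (k : ℕ) + 1 = ((0 : Fin (m + 1)) : ℕ) then (1:ℝ) else 0) = 0 := by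
        refine Finset.sum_eq_zero fun k _ => ?_
        rw [if_neg (by simp), mul_zero]
      rw [hz, zero_add]
      have hm0 : m - ((0 : Fin (m + 1)) : ℕ) = m := by simp
      rw [hm0, hkey]
      have hγm : γ m = c 0 := by
        simp only [hγ_def]
        congr 1
        exact Fin.ext (by simp only [Fin.val_mk, Fin.val_zero]; omega)
      show γ m * x i = x i * c 0
      rw [hγm]; ring
    | succ t =>
      have hs : ∑ k : Fin (m + 1), P i k
          * (if (k : ℕ) + 1 = ((t.succ : Fin (m + 1)) : ℕ) then (1:ℝ) else 0)
          = q (m - (t : ℕ)) i := by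
        have e1 : ∀ k : Fin (m + 1),
            P i k * (if (k : ℕ) + 1 = ((t.succ : Fin (m + 1)) : ℕ) then (1:ℝ) else 0)
            = if k = t.castSucc then P i k else 0 := by
          intro k
          rw [Fin.val_succ]
          by_cases h : (k : ℕ) = (t : ℕ)
          · rw [if_pos (by omega), if_pos (Fin.ext (by simpa using h)), mul_one]
          · rw [if_neg (by omega), if_neg (fun hk => h (by rw [hk]; simp)), mul_zero]
        rw [Finset.sum_congr rfl fun k _ => e1 k, Finset.sum_ite_eq' Finset.univ t.castSucc,
          if_pos (Finset.mem_univ _)]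
        show q (m - ((t.castSucc : Fin (m + 1)) : ℕ)) i = q (m - (t : ℕ)) i
        rw [Fin.coe_castSucc]
      rw [hs]
      have ht : (t : ℕ) < m := t.isLt
      have hmt : m - ((t.succ : Fin (m + 1)) : ℕ) = m - ((t : ℕ) + 1) := by
        rw [Fin.val_succ]
      rw [hmt, hAq (m - ((t : ℕ) + 1))]
      have e2 : m - ((t : ℕ) + 1) + 1 = m - (t : ℕ) := by omega
      have e3 : γ (m - ((t : ℕ) + 1)) = c t.succ := by
        simp only [hγ_def]
        congr 1
        refine Fin.ext ?_
        rw [Fin.val_succ, Fin.val_mk]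
        omega
      rw [e2, e3]
      show q (m - (t : ℕ)) i + c t.succ * x i = q (m - (t : ℕ)) i + x i * c t.succ
      ring
  refine ⟨P⁻¹, c, ?_, ?_, ?_⟩
  · have h1 : P⁻¹ * P = 1 := Matrix.nonsing_inv_mul P hPdet
    have h2 : P⁻¹.det * P.det = 1 := by
      rw [← Matrix.det_mul, h1, Matrix.det_one]
    exact IsUnit.of_mul_eq_one _ h2
  · rw [← hPg, Matrix.mulVec_mulVec, Matrix.nonsing_inv_mul P hPdet, Matrix.one_mulVec]
  · rw [Matrix.nonsing_inv_nonsing_inv P hPdet, Matrix.mul_assoc, hAP, ← Matrix.mul_assoc,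
      Matrix.nonsing_inv_mul P hPdet, Matrix.one_mul]
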